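/- Let M0 be a maximal matching of G, M* a maximum matching, and W_M the set of edges of M* with exactly one endpoint in V(M0). Suppose W is a set of wings (edges with exactly one endpoint in V(M0)) such that deg_W(u) ≤ 1 for every u ∈ V(M0), and such that for every wing (u,v) ∈ W_M with u ∈ V(M0) and v ∉ V(M0), either (u,v) ∈ W, or deg_W(u) ≥ 1, or deg_W(v) ≥ 2. Then |W| ≥ (2/3)|W_M|. -/
import Mathlib


variable {V : Type*} [Fintype V] [DecidableEq V]

/-- A matching of `G`: a finite set of edges of `G` that are pairwise vertex-disjoint. -/
def IsMatching (G : SimpleGraph V) (M : Finset (Sym2 V)) : Prop :=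
  (∀ e ∈ M, e ∈ G.edgeSet) ∧
    ∀ e ∈ M, ∀ f ∈ M, e ≠ f → ∀ v : V, v ∈ e → v ∉ f

/-- The set of vertices covered by a set of edges. -/
def mverts (M : Finset (Sym2 V)) : Set V := {v | ∃ e ∈ M, v ∈ e}

/-- The degree of a vertex `x` in a set of edges `W`. -/
def degW (W : Finset (Sym2 V)) (x : V) : ℕ := (W.filter (fun e => x ∈ e)).card

/-- If `W` is a set of wings with `deg_W(u) ≤ 1` for every `u ∈ V(M0)` such that every
wing `(u,v) ∈ W_M` (with `u ∈ V(M0)`, `v ∉ V(M0)`) is in `W`, or has `deg_W(u) ≥ 1`,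
or `deg_W(v) ≥ 2`, then `|W| ≥ (2/3)|W_M|`. -/
theorem greedy_wings_lower_bound (G : SimpleGraph V) (M0 Mstar WM W : Finset (Sym2 V))
    (hM0 : IsMatching G M0)
    (hM0maximal : ∀ e ∈ G.edgeSet, e ∉ M0 → ¬ IsMatching G (insert e M0))
    (hMstar : IsMatching G Mstar)
    (hMstarMax : ∀ N : Finset (Sym2 V), IsMatching G N → N.card ≤ Mstar.card)
    (hWM : ∀ e, e ∈ WM ↔ e ∈ Mstar ∧
      ∃ u v : V, e = s(u, v) ∧ u ∈ mverts M0 ∧ v ∉ mverts M0)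
    (hW : ∀ e ∈ W, e ∈ G.edgeSet ∧
      ∃ u v : V, e = s(u, v) ∧ u ∈ mverts M0 ∧ v ∉ mverts M0)
    (hdeg : ∀ u ∈ mverts M0, degW W u ≤ 1)
    (hgreedy : ∀ u v : V, s(u, v) ∈ WM → u ∈ mverts M0 → v ∉ mverts M0 →
      s(u, v) ∈ W ∨ 1 ≤ degW W u ∨ 2 ≤ degW W v) :
    2 * WM.card ≤ 3 * W.card := by
  classical
  -- a vertex lies in at most one edge of WM
  have hdisj : ∀ e ∈ WM, ∀ f ∈ WM, ∀ x : V, x ∈ e → x ∈ f → e = f := by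
    intro e he f hf x hxe hxf
    by_contra hne
    exact hMstar.2 e ((hWM e).1 he).1 f ((hWM f).1 hf).1 hne x hxe hxf
  set p : Sym2 V → Prop := fun e => ∃ f ∈ W, ∃ x ∈ e, x ∈ f ∧ x ∈ mverts M0 with hp
  set A := WM.filter p with hAdef
  set B := WM.filter (fun e => ¬ p e) with hBdef
  have hWMcard : A.card + B.card = WM.card :=
    Finset.card_filter_add_card_filter_not (p := p)
  -- |A| ≤ |W|
  have hAW : A.card ≤ W.card := by
    set P1 := (A ×ˢ W).filter (fun q => ∃ x, x ∈ q.1 ∧ x ∈ q.2 ∧ x ∈ mverts M0) with hP1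
    have h1 : A.card ≤ P1.card := by
      apply Finset.card_le_card_of_surjOn Prod.fst
      intro e he
      simp only [Finset.mem_coe] at he
      obtain ⟨f, hfW, x, hxe, hxf, hxm⟩ := (Finset.mem_filter.1 he).2
      exact ⟨(e, f), Finset.mem_filter.2 ⟨Finset.mem_product.2 ⟨he, hfW⟩, x, hxe, hxf, hxm⟩, rfl⟩
    have h2 : P1.card ≤ W.card := by
      apply Finset.card_le_card_of_injOn Prod.snd
      · intro q hq
        exact (Finset.mem_product.1 (Finset.mem_filter.1 hq).1).2
      · intro q hq r hr hqr
        simp only [Finset.mem_coe] at hq hr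
        obtain ⟨hq1, x, hxq1, hxq2, hxm⟩ := Finset.mem_filter.1 hq
        obtain ⟨hr1, y, hyr1, hyr2, hym⟩ := Finset.mem_filter.1 hr
        have hfW := (Finset.mem_product.1 hq1).2
        obtain ⟨-, a, b, hab, ham, hbm⟩ := hW _ hfW
        have hx : x = a := by
          rw [hab] at hxq2
          rcases Sym2.mem_iff.1 hxq2 with h | h
          · exact h
          · exact absurd (h ▸ hxm) hbm
        have hy : y = a := by
          rw [← hqr, hab] at hyr2
          rcases Sym2.mem_iff.1 hyr2 with h | h
          · exact h
          · exact absurd (h ▸ hym) hbm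
        have hqWM : q.1 ∈ WM := Finset.mem_of_mem_filter _ (Finset.mem_product.1 hq1).1
        have hrWM : r.1 ∈ WM := Finset.mem_of_mem_filter _ (Finset.mem_product.1 hr1).1
        have : q.1 = r.1 := hdisj _ hqWM _ hrWM a (hx ▸ hxq1) (hy ▸ hyr1)
        exact Prod.ext this hqr
    exact h1.trans h2
  -- every e ∈ B has a non-M0 endpoint of W-degree ≥ 2
  have hBdeg : ∀ e ∈ B, ∃ v, v ∈ e ∧ v ∉ mverts M0 ∧ 2 ≤ degW W v := by
    intro e he
    have heWM : e ∈ WM := Finset.mem_of_mem_filter _ he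
    have hnA : ¬ p e := (Finset.mem_filter.1 he).2
    obtain ⟨-, u, v, huv, hum, hvm⟩ := (hWM e).1 heWM
    subst huv
    rcases hgreedy u v heWM hum hvm with h | h | h
    · exact absurd ⟨s(u, v), h, u, Sym2.mem_mk_left u v, Sym2.mem_mk_left u v, hum⟩ hnA
    · obtain ⟨f, hf⟩ := Finset.card_pos.1 h
      obtain ⟨hfW, huf⟩ := Finset.mem_filter.1 hf
      exact absurd ⟨f, hfW, u, Sym2.mem_mk_left u v, huf, hum⟩ hnA
    · exact ⟨v, Sym2.mem_mk_right u v, hvm, h⟩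
  -- 2|B| ≤ |W|
  have hBW : 2 * B.card ≤ W.card := by
    set cond : Sym2 V → Sym2 V → Prop := fun e f => ∃ x, x ∈ e ∧ x ∈ f ∧ x ∉ mverts M0 with hcond
    set P2 := B.biUnion (fun e => (W.filter (cond e)).image (fun f => (e, f))) with hP2
    have hdisj2 : ∀ e ∈ B, ∀ f ∈ B, e ≠ f →
        Disjoint ((W.filter (cond e)).image (fun g => (e, g)))
          ((W.filter (cond f)).image (fun g => (f, g))) := by
      intro e _ f _ hef
      rw [Finset.disjoint_left]
      intro q hq hq'
      obtain ⟨g, -, rfl⟩ := Finset.mem_image.1 hq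
      obtain ⟨g', -, h'⟩ := Finset.mem_image.1 hq'
      exact hef (congrArg Prod.fst h'.symm)
    have hcard : P2.card = ∑ e ∈ B, (W.filter (cond e)).card := by
      rw [hP2, Finset.card_biUnion hdisj2]
      refine Finset.sum_congr rfl fun e _ => ?_
      exact Finset.card_image_of_injective _ (fun a b hab => congrArg Prod.snd hab)
    have h1 : 2 * B.card ≤ P2.card := by
      rw [hcard, mul_comm]
      calc B.card * 2 = ∑ _e ∈ B, 2 := by rw [Finset.sum_const, smul_eq_mul]
        _ ≤ ∑ e ∈ B, (W.filter (cond e)).card := by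
            refine Finset.sum_le_sum fun e he => ?_
            obtain ⟨v, hve, hvm, hv2⟩ := hBdeg e he
            refine le_trans hv2 (Finset.card_le_card ?_)
            intro f hf
            obtain ⟨hfW, hvf⟩ := Finset.mem_filter.1 hf
            exact Finset.mem_filter.2 ⟨hfW, v, hve, hvf, hvm⟩
    have h2 : P2.card ≤ W.card := by
      apply Finset.card_le_card_of_injOn Prod.snd
      · intro q hq
        obtain ⟨e, -, hq'⟩ := Finset.mem_biUnion.1 hq
        obtain ⟨g, hg, rfl⟩ := Finset.mem_image.1 hq'
        exact Finset.mem_of_mem_filter _ hg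
      · intro q hq r hr hqr
        simp only [Finset.mem_coe] at hq hr
        obtain ⟨e, heB, hq'⟩ := Finset.mem_biUnion.1 hq
        obtain ⟨g, hg, rfl⟩ := Finset.mem_image.1 hq'
        obtain ⟨e', heB', hr'⟩ := Finset.mem_biUnion.1 hr
        obtain ⟨g', hg', rfl⟩ := Finset.mem_image.1 hr'
        simp only at hqr
        subst hqr
        obtain ⟨hgW, x, hxe, hxg, hxm⟩ := Finset.mem_filter.1 hg
        obtain ⟨-, y, hye, hyg, hym⟩ := Finset.mem_filter.1 hg'
        obtain ⟨-, a, b, hab, ham, hbm⟩ := hW _ hgW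
        have hx : x = b := by
          rw [hab] at hxg
          rcases Sym2.mem_iff.1 hxg with h | h
          · exact absurd (h ▸ ham) hxm
          · exact h
        have hy : y = b := by
          rw [hab] at hyg
          rcases Sym2.mem_iff.1 hyg with h | h
          · exact absurd (h ▸ ham) hym
          · exact h
        have : e = e' := hdisj _ (Finset.mem_of_mem_filter _ heB) _
          (Finset.mem_of_mem_filter _ heB') b (hx ▸ hxe) (hy ▸ hye)
        rw [this]
    exact h1.trans h2
  omega
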